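/- Let n ≥ 2k ≥ 0 and let w be a permutation of {1,...,n}. Then w satisfies the condition that for every 1 ≤ i ≤ n, either w(i) = 1, or w(i) = n−k+1, or there exists j < i with w(j) = w(i) − 1, if and only if w = w_{ℓ_1,...,ℓ_k} for some 1 ≤ ℓ_1 < ℓ_2 < ... < ℓ_k ≤ n. -/

import Mathlib

open scoped BigOperators

/-- The permutation `w_{ℓ₁,…,ℓₖ}` of `{1,…,n}` (as a function `ℕ → ℕ`):
`w i = n - k + j` if `i = ℓ j` for some `1 ≤ j ≤ k`, and `w i = i - j` if
`ℓ j < i < ℓ (j+1)` (with conventions `ℓ 0 = 0`, `ℓ (k+1) = n+1`); here `j`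
is recovered as the number of `r ∈ {1,…,k}` with `ℓ r ≤ i` (resp. `ℓ r < i`). -/
def wPerm (n k : ℕ) (ℓ : ℕ → ℕ) (i : ℕ) : ℕ :=
  if ∃ j ∈ Finset.Icc 1 k, ℓ j = i then
    n - k + ((Finset.Icc 1 k).filter fun j => ℓ j ≤ i).card
  else
    i - ((Finset.Icc 1 k).filter fun j => ℓ j < i).card

/-- The conditions `1 ≤ ℓ 1 < ℓ 2 < ⋯ < ℓ k ≤ n`. -/
def goodL (n k : ℕ) (ℓ : ℕ → ℕ) : Prop :=
  (∀ j ∈ Finset.Icc 1 k, 1 ≤ ℓ j ∧ ℓ j ≤ n) ∧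
    ∀ j j' : ℕ, 1 ≤ j → j < j' → j' ≤ k → ℓ j < ℓ j'

private lemma chainLt {f : ℕ → ℕ} {a b : ℕ}
    (h : ∀ v, a ≤ v → v + 1 ≤ b → f v < f (v + 1)) :
    ∀ v' v, a ≤ v → v < v' → v' ≤ b → f v < f v' := by
  intro v'
  induction v' with
  | zero => intro v _ hlt _; omega
  | succ m ih =>
    intro v hv hlt hb
    rcases Nat.lt_or_ge v m with hlt' | hge
    · exact (ih v hv hlt' (by omega)).trans (h m (by omega) hb)
    · have hvm : v = m := by omega
      subst hvm
      exact h v hv hb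

private lemma injOnL {k : ℕ} {ℓ : ℕ → ℕ}
    (hmono : ∀ j j' : ℕ, 1 ≤ j → j < j' → j' ≤ k → ℓ j < ℓ j')
    {r r' : ℕ} (hr : r ∈ Finset.Icc 1 k) (hr' : r' ∈ Finset.Icc 1 k)
    (he : ℓ r = ℓ r') : r = r' := by
  simp only [Finset.mem_Icc] at hr hr'
  by_contra hne
  rcases Nat.lt_or_ge r r' with hlt | hge
  · have := hmono r r' hr.1 hlt hr'.2; omega
  · have := hmono r' r hr'.1 (by omega) hr.2; omega

private lemma filter_le_card {k : ℕ} {ℓ : ℕ → ℕ}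
    (hmono : ∀ j j' : ℕ, 1 ≤ j → j < j' → j' ≤ k → ℓ j < ℓ j') {j : ℕ}
    (hj1 : 1 ≤ j) (hj2 : j ≤ k) :
    ((Finset.Icc 1 k).filter fun r => ℓ r ≤ ℓ j).card = j := by
  have heq : ((Finset.Icc 1 k).filter fun r => ℓ r ≤ ℓ j) = Finset.Icc 1 j := by
    ext r
    simp only [Finset.mem_filter, Finset.mem_Icc]
    constructor
    · rintro ⟨⟨h1, h2⟩, hle⟩
      refine ⟨h1, ?_⟩
      by_contra hc
      have := hmono j r hj1 (by omega) h2
      omega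
    · rintro ⟨h1, h2⟩
      refine ⟨⟨h1, by omega⟩, ?_⟩
      rcases eq_or_lt_of_le h2 with rfl | hlt
      · exact le_rfl
      · exact (hmono r j h1 hlt hj2).le
  rw [heq, Nat.card_Icc]
  omega

private lemma card_lt_bound {k : ℕ} {ℓ : ℕ → ℕ}
    (hmono : ∀ j j' : ℕ, 1 ≤ j → j < j' → j' ≤ k → ℓ j < ℓ j')
    (hb : ∀ j ∈ Finset.Icc 1 k, 1 ≤ ℓ j) (i : ℕ) :
    ((Finset.Icc 1 k).filter fun r => ℓ r < i).card ≤ i - 1 := by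
  have := Finset.card_le_card_of_injOn (f := ℓ)
    (s := (Finset.Icc 1 k).filter fun r => ℓ r < i) (t := Finset.Icc 1 (i - 1))
    (fun r hr => by
      simp only [Finset.mem_coe, Finset.mem_filter] at hr
      have := hb r hr.1
      simp only [Finset.mem_coe, Finset.mem_Icc]
      omega)
    (fun r hr r' hr' he => by
      simp only [Finset.coe_filter, Set.mem_setOf_eq] at hr hr'
      exact injOnL hmono hr.1 hr'.1 he)
  simpa [Nat.card_Icc] using this

theorem wPerm_iff_springer_condition (n k : ℕ) (h : 2 * k ≤ n) (w : ℕ → ℕ)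
    (hw : Set.BijOn w (Set.Icc 1 n) (Set.Icc 1 n)) :
    (∀ i ∈ Set.Icc 1 n,
        w i = 1 ∨ w i = n - k + 1 ∨ ∃ j, 1 ≤ j ∧ j < i ∧ w j = w i - 1) ↔
      (∃ ℓ : ℕ → ℕ, goodL n k ℓ ∧ ∀ i ∈ Set.Icc 1 n, w i = wPerm n k ℓ i) := by
  classical
  constructor
  · -- forward direction
    intro hS
    set u : ℕ → ℕ := Function.invFunOn w (Set.Icc 1 n) with hu
    have hui : ∀ v ∈ Set.Icc 1 n, u v ∈ Set.Icc 1 n ∧ w (u v) = v := by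
      intro v hv
      obtain ⟨a, ha, hav⟩ := hw.surjOn hv
      exact ⟨Function.invFunOn_mem ⟨a, ha, hav⟩, Function.invFunOn_eq ⟨a, ha, hav⟩⟩
    have huw : ∀ i ∈ Set.Icc 1 n, u (w i) = i := by
      intro i hi
      exact hw.injOn (hui (w i) (hw.mapsTo hi)).1 hi (hui (w i) (hw.mapsTo hi)).2
    have step : ∀ v, 2 ≤ v → v ≤ n → v ≠ n - k + 1 → u (v - 1) < u v := by
      intro v hv2 hvn hvne
      have hvmem : v ∈ Set.Icc 1 n := by simp [Set.mem_Icc]; omega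
      obtain ⟨humem, hwu⟩ := hui v hvmem
      rcases hS (u v) humem with h1 | h1 | ⟨j, hj1, hj2, hj3⟩
      · omega
      · omega
      · have hjmem : j ∈ Set.Icc 1 n := by
          simp only [Set.mem_Icc] at humem ⊢; omega
        rw [hwu] at hj3
        have hj4 : u (v - 1) = j := by
          rw [← hj3]
          exact huw j hjmem
        omega
    have mono1 : ∀ v v', 1 ≤ v → v < v' → v' ≤ n - k → u v < u v' := by
      intro v v' h1 h2 h3
      refine chainLt (a := 1) (b := n - k) ?_ v' v h1 h2 h3
      intro v hv hvb
      have := step (v + 1) (by omega) (by omega) (by omega)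
      simpa using this
    have mono2 : ∀ v v', n - k + 1 ≤ v → v < v' → v' ≤ n → u v < u v' := by
      intro v v' h1 h2 h3
      refine chainLt (a := n - k + 1) (b := n) ?_ v' v h1 h2 h3
      intro v hv hvb
      have := step (v + 1) (by omega) (by omega) (by omega)
      simpa using this
    set L : ℕ → ℕ := fun j => u (n - k + j) with hL
    have hLdef : ∀ j, L j = u (n - k + j) := fun j => rfl
    have hLw : ∀ j, 1 ≤ j → j ≤ k → w (L j) = n - k + j := by
      intro j h1 h2
      rw [hLdef]
      exact (hui _ (by simp [Set.mem_Icc]; omega)).2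
    have hLmem : ∀ j, 1 ≤ j → j ≤ k → 1 ≤ L j ∧ L j ≤ n := by
      intro j h1 h2
      rw [hLdef]
      have := (hui (n - k + j) (by simp [Set.mem_Icc]; omega)).1
      simpa [Set.mem_Icc] using this
    have hLmono : ∀ j j' : ℕ, 1 ≤ j → j < j' → j' ≤ k → L j < L j' := by
      intro j j' h1 h2 h3
      rw [hLdef, hLdef]
      exact mono2 (n - k + j) (n - k + j') (by omega) (by omega) (by omega)
    have hLinv : ∀ p ∈ Set.Icc 1 n, n - k < w p → L (w p - (n - k)) = p := by
      intro p hp hgt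
      rw [hLdef]
      have hwp : 1 ≤ w p ∧ w p ≤ n := by simpa [Set.mem_Icc] using hw.mapsTo hp
      have he : n - k + (w p - (n - k)) = w p := by omega
      rw [he]
      exact huw p hp
    refine ⟨L, ⟨fun j hj => by
        simp only [Finset.mem_Icc] at hj; exact hLmem j hj.1 hj.2, hLmono⟩, ?_⟩
    intro i hi
    have hi' : 1 ≤ i ∧ i ≤ n := by simpa [Set.mem_Icc] using hi
    have hwi' : 1 ≤ w i ∧ w i ≤ n := by simpa [Set.mem_Icc] using hw.mapsTo hi
    by_cases hex : ∃ j ∈ Finset.Icc 1 k, L j = i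
    · obtain ⟨j, hj, hji⟩ := hex
      simp only [Finset.mem_Icc] at hj
      rw [wPerm, if_pos ⟨j, by simp [Finset.mem_Icc]; omega, hji⟩, ← hji,
        filter_le_card hLmono hj.1 hj.2]
      exact hLw j hj.1 hj.2
    · -- i is not one of the L's, so w i ≤ n - k
      have hwle : w i ≤ n - k := by
        by_contra hc
        push_neg at hc
        exact hex ⟨w i - (n - k), by simp [Finset.mem_Icc]; omega, hLinv i hi hc⟩
      have hcard1 : ((Finset.Icc 1 i).filter fun p => w p ≤ n - k).card = w i := by
        have hb : ((Finset.Icc 1 i).filter fun p => w p ≤ n - k).card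
            = (Finset.Icc 1 (w i)).card := by
          refine Finset.card_bij (fun p _ => w p) ?_ ?_ ?_
          · intro p hp
            simp only [Finset.mem_filter, Finset.mem_Icc] at hp ⊢
            have hpmem : p ∈ Set.Icc 1 n := by simp [Set.mem_Icc]; omega
            have hwp : 1 ≤ w p ∧ w p ≤ n := by simpa [Set.mem_Icc] using hw.mapsTo hpmem
            refine ⟨hwp.1, ?_⟩
            by_contra hc
            push_neg at hc
            have := mono1 (w i) (w p) (by omega) hc hp.2
            rw [huw i hi, huw p hpmem] at this
            omega
          · intro p hp p' hp' he
            simp only [Finset.mem_filter, Finset.mem_Icc] at hp hp'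
            exact hw.injOn (by simp [Set.mem_Icc]; omega) (by simp [Set.mem_Icc]; omega) he
          · intro v hv
            simp only [Finset.mem_Icc] at hv
            have hvmem : v ∈ Set.Icc 1 n := by simp [Set.mem_Icc]; omega
            obtain ⟨humem, hwu⟩ := hui v hvmem
            have huvle : u v ≤ i := by
              rcases eq_or_lt_of_le hv.2 with heq | hlt
              · rw [heq, huw i hi]
              · have := mono1 v (w i) hv.1 hlt hwle
                rw [huw i hi] at this
                omega
            refine ⟨u v, ?_, hwu⟩
            simp only [Finset.mem_filter, Finset.mem_Icc]
            simp only [Set.mem_Icc] at humem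
            exact ⟨⟨humem.1, huvle⟩, by omega⟩
        rw [hb, Nat.card_Icc]
        omega
      have hcard2 : ((Finset.Icc 1 i).filter fun p => ¬ (w p ≤ n - k)).card =
          ((Finset.Icc 1 k).filter fun r => L r < i).card := by
        refine (Finset.card_bij (fun r _ => L r) ?_ ?_ ?_).symm
        · intro r hr
          simp only [Finset.mem_filter, Finset.mem_Icc] at hr ⊢
          have h1 := hLmem r hr.1.1 hr.1.2
          have h2 := hLw r hr.1.1 hr.1.2
          exact ⟨⟨h1.1, by omega⟩, by omega⟩
        · intro r hr r' hr' he
          simp only [Finset.mem_filter, Finset.mem_Icc] at hr hr'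
          have h1 := hLw r hr.1.1 hr.1.2
          have h2 := hLw r' hr'.1.1 hr'.1.2
          rw [he, h2] at h1
          omega
        · intro p hp
          simp only [Finset.mem_filter, Finset.mem_Icc] at hp
          push_neg at hp
          have hpmem : p ∈ Set.Icc 1 n := by simp [Set.mem_Icc]; omega
          have hwp : 1 ≤ w p ∧ w p ≤ n := by simpa [Set.mem_Icc] using hw.mapsTo hpmem
          have hpi : p < i := by
            rcases eq_or_lt_of_le hp.1.2 with heq | hlt
            · subst heq; omega
            · exact hlt
          refine ⟨w p - (n - k), ?_, hLinv p hpmem hp.2⟩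
          simp only [Finset.mem_filter, Finset.mem_Icc]
          rw [hLinv p hpmem hp.2]
          exact ⟨⟨by omega, by omega⟩, hpi⟩
      have htot := Finset.card_filter_add_card_filter_not
        (s := Finset.Icc 1 i) (p := fun p => w p ≤ n - k)
      rw [hcard1, hcard2, Nat.card_Icc] at htot
      rw [wPerm, if_neg hex]
      omega
  · -- backward direction
    rintro ⟨ℓ, ⟨hbound, hmono⟩, hwp⟩ i hi
    have hi' : 1 ≤ i ∧ i ≤ n := by simpa [Set.mem_Icc] using hi
    by_cases hex : ∃ j ∈ Finset.Icc 1 k, ℓ j = i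
    · obtain ⟨j, hj, hji⟩ := hex
      simp only [Finset.mem_Icc] at hj
      have hwij : w i = n - k + j := by
        rw [hwp i hi, wPerm, if_pos ⟨j, by simp [Finset.mem_Icc]; omega, hji⟩, ← hji,
          filter_le_card hmono hj.1 hj.2]
      by_cases hj1 : j = 1
      · right; left; rw [hwij, hj1]
      · right; right
        have hjm : j - 1 ∈ Finset.Icc 1 k := by simp [Finset.mem_Icc]; omega
        have hlt : ℓ (j - 1) < i := by
          rw [← hji]; exact hmono (j - 1) j (by omega) (by omega) hj.2
        have hb := hbound (j - 1) hjm
        refine ⟨ℓ (j - 1), hb.1, hlt, ?_⟩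
        have : w (ℓ (j - 1)) = n - k + (j - 1) := by
          rw [hwp (ℓ (j - 1)) (by simp [Set.mem_Icc]; omega), wPerm,
            if_pos ⟨j - 1, hjm, rfl⟩, filter_le_card hmono (by omega : 1 ≤ j - 1) (by omega)]
        rw [this, hwij]
        omega
    · set c := ((Finset.Icc 1 k).filter fun r => ℓ r < i).card with hc
      have hwic : w i = i - c := by rw [hwp i hi, wPerm, if_neg hex]
      have hcle : c ≤ i - 1 := card_lt_bound hmono (fun r hr => (hbound r hr).1) i
      by_cases hw1 : w i = 1
      · left; exact hw1
      · right; right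
        have hige : 2 ≤ i - c := by omega
        -- count of ℓ-positions in [1, i-1] is c
        have hcard3 : ((Finset.Icc 1 (i - 1)).filter
            fun p => ∃ r ∈ Finset.Icc 1 k, ℓ r = p).card = c := by
          rw [hc]
          refine (Finset.card_bij (fun r _ => ℓ r) ?_ ?_ ?_).symm
          · intro r hr
            simp only [Finset.mem_filter, Finset.mem_Icc] at hr ⊢
            obtain ⟨⟨hr1, hr2⟩, hr3⟩ := hr
            have := hbound r (by simp only [Finset.mem_Icc]; omega)
            exact ⟨⟨by omega, by omega⟩, r, ⟨by omega, by omega⟩, rfl⟩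
          · intro r hr r' hr' he
            simp only [Finset.mem_filter] at hr hr'
            exact injOnL hmono hr.1 hr'.1 he
          · intro p hp
            simp only [Finset.mem_filter, Finset.mem_Icc] at hp
            obtain ⟨hp1, r, hr, hrp⟩ := hp
            refine ⟨r, ?_, hrp⟩
            simp only [Finset.mem_filter, Finset.mem_Icc]
            exact ⟨hr, by omega⟩
        have htot := Finset.card_filter_add_card_filter_not
          (s := Finset.Icc 1 (i - 1)) (p := fun p => ∃ r ∈ Finset.Icc 1 k, ℓ r = p)
        rw [hcard3, Nat.card_Icc] at htot
        set T := (Finset.Icc 1 (i - 1)).filter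
            (fun p => ¬ ∃ r ∈ Finset.Icc 1 k, ℓ r = p) with hT
        have hTcard : T.card = i - 1 - c := by omega
        have hTne : T.Nonempty := by
          rw [← Finset.card_pos, hTcard]; omega
        set j := T.max' hTne with hj
        have hjmem := T.max'_mem hTne
        rw [← hj] at hjmem
        simp only [hT, Finset.mem_filter, Finset.mem_Icc] at hjmem
        obtain ⟨⟨hj1, hj2⟩, hjnotl'⟩ := hjmem
        have hjnotl : ¬ ∃ r ∈ Finset.Icc 1 k, ℓ r = j := by
          simpa only [Finset.mem_Icc] using hjnotl'
        have hmax : ∀ p, j < p → p ≤ i - 1 → ∃ r ∈ Finset.Icc 1 k, ℓ r = p := by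
          intro p hp1 hp2
          by_contra hcp
          have hpT : p ∈ T := by
            simp only [hT, Finset.mem_filter, Finset.mem_Icc]
            refine ⟨⟨by omega, hp2⟩, ?_⟩
            simpa only [Finset.mem_Icc] using hcp
          have := T.le_max' p hpT
          omega
        set d := ((Finset.Icc 1 k).filter fun r => ℓ r < j).card with hd
        have hwj : w j = j - d := by
          rw [hwp j (by simp [Set.mem_Icc]; omega), wPerm, if_neg hjnotl]
        have hdle : d ≤ j - 1 := card_lt_bound hmono (fun r hr => (hbound r hr).1) j
        have hkey : c = d + (i - 1 - j) := by
          have hsplit : ((Finset.Icc 1 k).filter fun r => ℓ r < i) =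
              ((Finset.Icc 1 k).filter fun r => ℓ r < j) ∪
                ((Finset.Icc 1 k).filter fun r => j < ℓ r ∧ ℓ r < i) := by
            ext r
            simp only [Finset.mem_union, Finset.mem_filter]
            constructor
            · rintro ⟨hr, hlt⟩
              rcases Nat.lt_trichotomy (ℓ r) j with hh | hh | hh
              · exact Or.inl ⟨hr, hh⟩
              · exact absurd ⟨r, hr, hh⟩ hjnotl
              · exact Or.inr ⟨hr, hh, hlt⟩
            · rintro (⟨hr, hlt⟩ | ⟨hr, _, hlt⟩)
              · exact ⟨hr, by omega⟩
              · exact ⟨hr, hlt⟩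
          have hdisj : Disjoint ((Finset.Icc 1 k).filter fun r => ℓ r < j)
              ((Finset.Icc 1 k).filter fun r => j < ℓ r ∧ ℓ r < i) := by
            rw [Finset.disjoint_left]
            intro r hr hr'
            simp only [Finset.mem_filter] at hr hr'
            omega
          have hcard4 : ((Finset.Icc 1 k).filter fun r => j < ℓ r ∧ ℓ r < i).card =
              i - 1 - j := by
            have : ((Finset.Icc 1 k).filter fun r => j < ℓ r ∧ ℓ r < i).card =
                (Finset.Icc (j + 1) (i - 1)).card := by
              refine Finset.card_bij (fun r _ => ℓ r) ?_ ?_ ?_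
              · intro r hr
                simp only [Finset.mem_filter] at hr
                simp only [Finset.mem_Icc]
                omega
              · intro r hr r' hr' he
                simp only [Finset.mem_filter] at hr hr'
                exact injOnL hmono hr.1 hr'.1 he
              · intro p hp
                simp only [Finset.mem_Icc] at hp
                obtain ⟨r, hr, hrp⟩ := hmax p (by omega) hp.2
                exact ⟨r, by simp only [Finset.mem_filter]; exact ⟨hr, by omega⟩, hrp⟩
            rw [this, Nat.card_Icc]
            omega
          rw [hc, hsplit, Finset.card_union_of_disjoint hdisj, hcard4, ← hd]
        refine ⟨j, hj1, by omega, ?_⟩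
        rw [hwj, hwic]
        omega
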